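/- Let σ : ℝ → ℝ be continuous with 0 < σ₋ ≤ σ(y) ≤ σ₊ for all y, let θ(x) := ∫_0^x (1/σ(y)) dy and b^θ := (b/σ) ∘ θ^{-1} for some b : ℝ → ℝ. Assume b^θ is continuously differentiable with M := sup_z |(b^θ)'(z)| < ∞ and (b^θ)'(z) ≤ −λ₀ < 0 for all z. Let h, h̄ : [0,∞) → ℝ be continuous with h_0 = h̄_0 = 0, and suppose 𝒳, 𝒳̄ : [0,∞) × ℝ → ℝ are continuous in time and satisfy 𝒳_t(x) = θ(x) + ∫_0^t b^θ(𝒳_s(x)) ds + h_t and 𝒳̄_t(x) = θ(x) + ∫_0^t b^θ(𝒳̄_s(x)) ds + h̄_t. Then there exist constants c > 0 and λ > 0, depending only on λ₀, M, σ₋ and σ₊, such that for all t ≥ 0, sup_{x ∈ ℝ} |θ^{-1}(𝒳_t(x)) − θ^{-1}(𝒳̄_t(x))| ≤ c ( |h_t − h̄_t| + ( ∫_0^t e^{−2λ(t−s)} |h_s − h̄_s|^2 ds )^{1/2} ). -/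

import Mathlib

/-- The Lamperti transformation `θ(x) := ∫_0^x dy/σ(y)`. -/
noncomputable def lamperti (σ : ℝ → ℝ) (x : ℝ) : ℝ := ∫ y in (0:ℝ)..x, 1/σ y

/-- The inverse of the Lamperti transformation. -/
noncomputable def lampertiInv (σ : ℝ → ℝ) : ℝ → ℝ := Function.invFun (lamperti σ)

/-- The transformed drift `b^θ := (b/σ) ∘ θ⁻¹`. -/
noncomputable def driftTheta (b σ : ℝ → ℝ) (z : ℝ) : ℝ :=
  b (lampertiInv σ z) / σ (lampertiInv σ z)

open MeasureTheory intervalIntegral Set Filter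

section Lamperti
variable {σ : ℝ → ℝ} {σm σp : ℝ}

lemma inv_cont (hσm : 0 < σm) (hσc : Continuous σ) (hσb : ∀ y, σm ≤ σ y ∧ σ y ≤ σp) :
    Continuous (fun y => 1 / σ y) :=
  continuous_const.div hσc (fun y => ne_of_gt (lt_of_lt_of_le hσm (hσb y).1))

lemma σp_pos (hσm : 0 < σm) (hσb : ∀ y, σm ≤ σ y ∧ σ y ≤ σp) : 0 < σp :=
  lt_of_lt_of_le hσm (le_trans (hσb 0).1 (hσb 0).2)


lemma lamperti_bounds (hσm : 0 < σm) (hσc : Continuous σ) (hσb : ∀ y, σm ≤ σ y ∧ σ y ≤ σp)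
    {x y : ℝ} (hxy : x ≤ y) :
    (y - x)/σp ≤ lamperti σ y - lamperti σ x ∧ lamperti σ y - lamperti σ x ≤ (y - x)/σm := by
  have hc := inv_cont hσm hσc hσb
  have hsub : lamperti σ y - lamperti σ x = ∫ u in x..y, 1/σ u :=
    integral_interval_sub_left (hc.intervalIntegrable 0 y) (hc.intervalIntegrable 0 x)
  have hσp := σp_pos hσm hσb
  constructor
  · rw [hsub]
    have : ∫ u in x..y, (1/σp) ≤ ∫ u in x..y, 1/σ u := by
      apply integral_mono_on hxy (intervalIntegrable_const) (hc.intervalIntegrable x y)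
      intro u _
      exact one_div_le_one_div_of_le (lt_of_lt_of_le hσm (hσb u).1) (hσb u).2
    simpa [div_eq_mul_inv, mul_comm, smul_eq_mul] using this
  · rw [hsub]
    have : ∫ u in x..y, 1/σ u ≤ ∫ u in x..y, (1/σm) := by
      apply integral_mono_on hxy (hc.intervalIntegrable x y) (intervalIntegrable_const)
      intro u _
      exact one_div_le_one_div_of_le hσm (hσb u).1
    simpa [div_eq_mul_inv, mul_comm, smul_eq_mul] using this

end Lamperti
section Lamperti2
variable {σ : ℝ → ℝ} {σm σp : ℝ}

lemma lamperti_zero (σ : ℝ → ℝ) : lamperti σ 0 = 0 := intervalIntegral.integral_same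

lemma lamperti_surj (hσm : 0 < σm) (hσc : Continuous σ) (hσb : ∀ y, σm ≤ σ y ∧ σ y ≤ σp) :
    Function.Surjective (lamperti σ) := by
  have hσp := σp_pos hσm hσb
  have hcont : Continuous (lamperti σ) := by
    rw [Metric.continuous_iff]
    intro x ε hε
    refine ⟨σm * ε, by positivity, fun y hy => ?_⟩
    rw [Real.dist_eq] at hy ⊢
    have key : ∀ u v : ℝ, u ≤ v → |lamperti σ v - lamperti σ u| ≤ (v - u)/σm := by
      intro u v huv
      have hb := lamperti_bounds hσm hσc hσb huv
      have h0 : (0:ℝ) ≤ (v - u)/σp := by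
        apply div_nonneg (by linarith) hσp.le
      rw [abs_of_nonneg (by linarith)]
      exact hb.2
    rcases le_total x y with hxy | hxy
    · calc |lamperti σ y - lamperti σ x| ≤ (y - x)/σm := key x y hxy
        _ < ε := by rw [div_lt_iff₀ hσm]; rw [abs_of_nonneg (by linarith)] at hy; linarith
    · rw [abs_sub_comm]
      calc |lamperti σ x - lamperti σ y| ≤ (x - y)/σm := key y x hxy
        _ < ε := by rw [div_lt_iff₀ hσm]; rw [abs_of_nonpos (by linarith)] at hy; linarith
  apply hcont.surjective
  · apply tendsto_atTop_mono' atTop (_ : ∀ᶠ y in atTop, y/σp ≤ lamperti σ y)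
    · exact Tendsto.atTop_div_const hσp tendsto_id
    · filter_upwards [eventually_ge_atTop (0:ℝ)] with y hy
      have := (lamperti_bounds hσm hσc hσb hy).1
      rw [lamperti_zero] at this
      rw [sub_zero, sub_zero] at this
      linarith
  · have hev : ∀ᶠ y in atBot, lamperti σ y ≤ y/σp := by
      filter_upwards [eventually_le_atBot (0:ℝ)] with y hy
      have h := (lamperti_bounds hσm hσc hσb hy).1
      rw [lamperti_zero] at h
      have : lamperti σ y ≤ -((0 - y)/σp) := by linarith
      calc lamperti σ y ≤ -((0 - y)/σp) := this
        _ = y/σp := by ring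
    exact tendsto_atBot_mono' atBot hev (Tendsto.atBot_div_const hσp tendsto_id)
  
lemma lampertiInv_lip (hσm : 0 < σm) (hσc : Continuous σ) (hσb : ∀ y, σm ≤ σ y ∧ σ y ≤ σp)
    (a c : ℝ) : |lampertiInv σ a - lampertiInv σ c| ≤ σp * |a - c| := by
  have hσp := σp_pos hσm hσb
  have hsurj := lamperti_surj hσm hσc hσb
  set u := lampertiInv σ a with hu
  set v := lampertiInv σ c with hv
  have hua : lamperti σ u = a := Function.invFun_eq (hsurj a)
  have hvc : lamperti σ v = c := Function.invFun_eq (hsurj c)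
  rcases le_total u v with huv | huv
  · have hb := (lamperti_bounds hσm hσc hσb huv).1
    rw [hua, hvc] at hb
    have h1 : v - u ≤ σp * (c - a) := by rw [div_le_iff₀ hσp] at hb; linarith
    have h2 : c - a ≤ |a - c| := by rw [abs_sub_comm]; exact le_abs_self _
    rw [abs_of_nonpos (by linarith)]
    nlinarith [abs_nonneg (a - c)]
  · have hb := (lamperti_bounds hσm hσc hσb huv).1
    rw [hua, hvc] at hb
    have h1 : u - v ≤ σp * (a - c) := by rw [div_le_iff₀ hσp] at hb; linarith
    have h2 : a - c ≤ |a - c| := le_abs_self _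
    rw [abs_of_nonneg (by linarith)]
    nlinarith [abs_nonneg (a - c)]

end Lamperti2
section Drift
variable {f : ℝ → ℝ} {M lam0 : ℝ}

lemma drift_facts (hf : ContDiff ℝ 1 f) (hM : ∀ z, |deriv f z| ≤ M)
    (hneg : ∀ z, deriv f z ≤ -lam0) :
    ∀ a c : ℝ, |f a - f c| ≤ M * |a - c| ∧ (a - c) * (f a - f c) ≤ -lam0 * (a - c)^2 := by
  have key : ∀ a c : ℝ, a < c →
      |f a - f c| ≤ M * |a - c| ∧ (a - c) * (f a - f c) ≤ -lam0 * (a - c)^2 := by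
    intro a c hac
    obtain ⟨ξ, _, hξ⟩ := exists_deriv_eq_slope f hac (hf.continuous.continuousOn)
      ((hf.differentiable one_ne_zero).differentiableOn)
    have heq : f c - f a = deriv f ξ * (c - a) := by
      rw [hξ, div_mul_cancel₀ _ (sub_ne_zero.mpr (ne_of_gt hac))]
    constructor
    · rw [abs_sub_comm, heq, abs_mul, abs_sub_comm a c]
      exact mul_le_mul_of_nonneg_right (hM ξ) (abs_nonneg _)
    · have h1 : f a - f c = deriv f ξ * (a - c) := by linarith [heq]
      rw [h1]
      have := hneg ξ
      nlinarith [sq_nonneg (a - c)]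
  intro a c
  rcases lt_trichotomy a c with hac | hac | hac
  · exact key a c hac
  · subst hac; simp [sq_nonneg]
  · obtain ⟨h1, h2⟩ := key c a hac
    refine ⟨by rwa [abs_sub_comm (f c), abs_sub_comm c] at h1, by nlinarith⟩

lemma core_ineq (hl : 0 < lam0) (hM0 : 0 ≤ M) (D g P : ℝ)
    (h1 : D * P ≤ -lam0 * D^2) (h2 : |P| ≤ M * |D|) :
    lam0*(D-g)^2 + 2*(D-g)*P ≤ (lam0 + (lam0+M)^2/lam0) * g^2 := by
  refine le_of_mul_le_mul_left ?_ hl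
  have hc : lam0 * ((lam0+M)^2/lam0) = (lam0+M)^2 := mul_div_cancel₀ _ (ne_of_gt hl)
  have hK : lam0 * ((lam0 + (lam0+M)^2/lam0) * g^2) = (lam0^2 + (lam0+M)^2) * g^2 := by
    linear_combination g^2 * hc
  rw [hK]
  have hDa : |D|^2 = D^2 := sq_abs D
  have hga : |g|^2 = g^2 := sq_abs g
  have hgP : -(g*P) ≤ |g| * |P| := by
    rw [← abs_mul]; exact neg_le_abs _
  have hgP2 : |g| * |P| ≤ M * (|g| * |D|) := by
    nlinarith [abs_nonneg g, abs_nonneg P, abs_nonneg D]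
  have hDg : -(D*g) ≤ |D| * |g| := by
    rw [← abs_mul]; exact (neg_le_abs _)
  nlinarith [sq_nonneg (lam0 * |D| - (lam0 + M) * |g|), abs_nonneg D, abs_nonneg g,
    mul_nonneg (abs_nonneg D) (abs_nonneg g)]

end Drift

/-- Wong–Zakai stability through the Lamperti transformation: if `b^θ` is `C¹` with
`|(b^θ)'| ≤ M` and `(b^θ)' ≤ −λ₀ < 0`, then for flows `𝒳, 𝒳̄` of the transformed equation
driven pathwise by continuous paths `h, h̄` (vanishing at `0`) there are constants
`c, λ > 0`, depending only on `λ₀, M, σ₋, σ₊`, such that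
`|θ⁻¹(𝒳_t(x)) − θ⁻¹(𝒳̄_t(x))| ≤ c(|h_t − h̄_t| + (∫_0^t e^{−2λ(t−s)}|h_s − h̄_s|² ds)^{1/2})`. -/
theorem stmt_14 (σ b : ℝ → ℝ) (σm σp : ℝ) (hσm : 0 < σm) (hσc : Continuous σ)
    (hσb : ∀ y, σm ≤ σ y ∧ σ y ≤ σp)
    (M lam0 : ℝ) (hlam0 : 0 < lam0)
    (hbθ : ContDiff ℝ 1 (driftTheta b σ))
    (hM : ∀ z, |deriv (driftTheta b σ) z| ≤ M)
    (hneg : ∀ z, deriv (driftTheta b σ) z ≤ -lam0) :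
    ∃ c > (0:ℝ), ∃ lam > (0:ℝ),
      ∀ (h hbar : ℝ → ℝ), Continuous h → Continuous hbar → h 0 = 0 → hbar 0 = 0 →
      ∀ (𝒳 𝒳bar : ℝ → ℝ → ℝ),
        (∀ x, Continuous (fun t => 𝒳 t x)) →
        (∀ x, Continuous (fun t => 𝒳bar t x)) →
        (∀ x, ∀ t ≥ (0:ℝ),
          𝒳 t x = lamperti σ x + (∫ s in (0:ℝ)..t, driftTheta b σ (𝒳 s x)) + h t) →
        (∀ x, ∀ t ≥ (0:ℝ),
          𝒳bar t x = lamperti σ x + (∫ s in (0:ℝ)..t, driftTheta b σ (𝒳bar s x)) + hbar t) →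
        ∀ t ≥ (0:ℝ), ∀ x : ℝ,
          |lampertiInv σ (𝒳 t x) - lampertiInv σ (𝒳bar t x)|
            ≤ c * (|h t - hbar t|
                + Real.sqrt (∫ s in (0:ℝ)..t, Real.exp (-(2*lam*(t-s))) * |h s - hbar s|^2)) := by
  have hσp := σp_pos hσm hσb
  have hM0 : 0 ≤ M := le_trans (abs_nonneg _) (hM 0)
  have hdf := drift_facts hbθ hM hneg
  have hfc : Continuous (driftTheta b σ) := hbθ.continuous
  set K := lam0 + (lam0+M)^2/lam0 with hKdef
  have hKpos : 0 < K := by positivity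
  refine ⟨σp * (1 + Real.sqrt K), by positivity, lam0/2, by positivity, ?_⟩
  intro h hbar hh hhbar hh0 hhbar0 𝒳 𝒳bar hXc hXbc hXeq hXbeq t ht x
  have hgc : Continuous (fun u => h u - hbar u) := hh.sub hhbar
  have hPc : Continuous (fun s => driftTheta b σ (𝒳 s x) - driftTheta b σ (𝒳bar s x)) :=
    (hfc.comp (hXc x)).sub (hfc.comp (hXbc x))
  set Y := fun s => ∫ u in (0:ℝ)..s,
      (driftTheta b σ (𝒳 u x) - driftTheta b σ (𝒳bar u x)) with hYdef
  have hYd : ∀ s, HasDerivAt Y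
      (driftTheta b σ (𝒳 s x) - driftTheta b σ (𝒳bar s x)) s := fun s =>
    intervalIntegral.integral_hasDerivAt_right (hPc.intervalIntegrable 0 s)
      (hPc.stronglyMeasurableAtFilter _ _) hPc.continuousAt
  have hY0 : Y 0 = 0 := intervalIntegral.integral_same
  have hD : ∀ s, 0 ≤ s → 𝒳 s x - 𝒳bar s x = Y s + (h s - hbar s) := by
    intro s hs
    have e1 := hXeq x s hs
    have e2 := hXbeq x s hs
    have hsub : Y s = (∫ u in (0:ℝ)..s, driftTheta b σ (𝒳 u x))
        - ∫ u in (0:ℝ)..s, driftTheta b σ (𝒳bar u x) := by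
      rw [hYdef]
      exact intervalIntegral.integral_sub ((hfc.comp (hXc x)).intervalIntegrable 0 s)
        ((hfc.comp (hXbc x)).intervalIntegrable 0 s)
    rw [e1, e2, hsub]; ring
  rcases eq_or_lt_of_le ht with ht0 | htpos
  · -- t = 0
    have ht0' : t = 0 := ht0.symm
    subst ht0'
    have e1 := hXeq x 0 le_rfl
    have e2 := hXbeq x 0 le_rfl
    rw [intervalIntegral.integral_same, hh0] at e1
    rw [intervalIntegral.integral_same, hhbar0] at e2
    rw [e1, e2]
    simp only [add_zero]
    rw [sub_self, abs_zero]
    have : (0:ℝ) ≤ |h 0 - hbar 0| + Real.sqrt (∫ s in (0:ℝ)..(0:ℝ),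
        Real.exp (-(2*(lam0/2)*(0-s))) * |h s - hbar s|^2) := by positivity
    positivity
  · -- t > 0
    set F := fun s => K * (∫ u in (0:ℝ)..s, Real.exp (lam0*u) * (h u - hbar u)^2)
        - Real.exp (lam0*s) * (Y s)^2 with hFdef
    have hI1c : Continuous (fun u => Real.exp (lam0*u) * (h u - hbar u)^2) :=
      (Real.continuous_exp.comp (continuous_const.mul continuous_id)).mul (hgc.pow 2)
    have hEd : ∀ s : ℝ, HasDerivAt (fun r => Real.exp (lam0*r)) (Real.exp (lam0*s) * lam0) s := by
      intro s
      have h2 : HasDerivAt (fun r : ℝ => lam0 * r) lam0 s := by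
        simpa using (hasDerivAt_id s).const_mul lam0
      exact h2.exp
    have hFd : ∀ s, HasDerivAt F
        (K * (Real.exp (lam0*s) * (h s - hbar s)^2)
          - ((Real.exp (lam0*s) * lam0) * (Y s)^2
            + Real.exp (lam0*s) * (2 * Y s *
              (driftTheta b σ (𝒳 s x) - driftTheta b σ (𝒳bar s x))))) s := by
      intro s
      have hd1 : HasDerivAt (fun r => ∫ u in (0:ℝ)..r, Real.exp (lam0*u) * (h u - hbar u)^2)
          (Real.exp (lam0*s) * (h s - hbar s)^2) s :=
        intervalIntegral.integral_hasDerivAt_right (hI1c.intervalIntegrable 0 s)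
          (hI1c.stronglyMeasurableAtFilter _ _) hI1c.continuousAt
      have hd3 : HasDerivAt (fun r => (Y r)^2)
          (2 * Y s * (driftTheta b σ (𝒳 s x) - driftTheta b σ (𝒳bar s x))) s := by
        simpa using (hYd s).fun_pow 2
      exact (hd1.const_mul K).sub ((hEd s).mul hd3)
    have hFdiff : Differentiable ℝ F := fun s => (hFd s).differentiableAt
    have hmono : MonotoneOn F (Icc 0 t) := by
      apply monotoneOn_of_deriv_nonneg (convex_Icc 0 t) hFdiff.continuous.continuousOn
        hFdiff.differentiableOn
      intro s hs
      rw [interior_Icc] at hs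
      rw [(hFd s).deriv]
      have hE : (0:ℝ) < Real.exp (lam0*s) := Real.exp_pos _
      have hs0 : (0:ℝ) ≤ s := hs.1.le
      have hYD : Y s = (𝒳 s x - 𝒳bar s x) - (h s - hbar s) := by
        have := hD s hs0; linarith
      have hcore := core_ineq hlam0 hM0 (𝒳 s x - 𝒳bar s x) (h s - hbar s)
        (driftTheta b σ (𝒳 s x) - driftTheta b σ (𝒳bar s x))
        (hdf (𝒳 s x) (𝒳bar s x)).2 (hdf (𝒳 s x) (𝒳bar s x)).1
      rw [← hKdef] at hcore
      have key : (Real.exp (lam0*s) * lam0) * (Y s)^2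
          + Real.exp (lam0*s) * (2 * Y s *
            (driftTheta b σ (𝒳 s x) - driftTheta b σ (𝒳bar s x)))
          ≤ K * (Real.exp (lam0*s) * (h s - hbar s)^2) := by
        have := mul_le_mul_of_nonneg_left hcore hE.le
        rw [hYD]
        nlinarith [this]
      linarith
    have hF0 : F 0 = 0 := by
      rw [hFdef]
      simp [hY0]
    have hFt : Real.exp (lam0*t) * (Y t)^2
        ≤ K * ∫ u in (0:ℝ)..t, Real.exp (lam0*u) * (h u - hbar u)^2 := by
      have := hmono (Set.left_mem_Icc.mpr ht) (Set.right_mem_Icc.mpr ht) ht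
      rw [hF0] at this
      rw [hFdef] at this
      simp only at this
      linarith
    -- change variables in the integral
    set J := ∫ s in (0:ℝ)..t, Real.exp (-(2*(lam0/2)*(t-s))) * |h s - hbar s|^2 with hJdef
    have hJ : J = Real.exp (-(lam0*t)) *
        ∫ u in (0:ℝ)..t, Real.exp (lam0*u) * (h u - hbar u)^2 := by
      rw [hJdef, ← intervalIntegral.integral_const_mul]
      apply intervalIntegral.integral_congr
      intro u _
      have harg : -(2*(lam0/2)*(t-u)) = -(lam0*t) + lam0*u := by ring
      simp only [sq_abs]
      rw [harg, Real.exp_add, mul_assoc]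
    have hexp1 : Real.exp (-(lam0*t)) * Real.exp (lam0*t) = 1 := by
      rw [← Real.exp_add]; simp
    have hYt2 : (Y t)^2 ≤ K * J := by
      have h5 := mul_le_mul_of_nonneg_left hFt (Real.exp_pos (-(lam0*t))).le
      rw [← mul_assoc, hexp1, one_mul] at h5
      calc (Y t)^2 ≤ Real.exp (-(lam0*t)) *
            (K * ∫ u in (0:ℝ)..t, Real.exp (lam0*u) * (h u - hbar u)^2) := h5
        _ = K * J := by rw [hJ]; ring
    have hJnn : (0:ℝ) ≤ J := by
      rw [hJdef]
      apply intervalIntegral.integral_nonneg ht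
      intro u _
      positivity
    have habsY : |Y t| ≤ Real.sqrt K * Real.sqrt J := by
      rw [← Real.sqrt_mul hKpos.le, ← Real.sqrt_sq_eq_abs]
      exact Real.sqrt_le_sqrt hYt2
    have hdiff : 𝒳 t x - 𝒳bar t x = Y t + (h t - hbar t) := hD t ht
    have hsK := Real.sqrt_nonneg K
    have hsJ := Real.sqrt_nonneg J
    have habsg := abs_nonneg (h t - hbar t)
    calc |lampertiInv σ (𝒳 t x) - lampertiInv σ (𝒳bar t x)|
        ≤ σp * |𝒳 t x - 𝒳bar t x| := lampertiInv_lip hσm hσc hσb _ _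
      _ = σp * |Y t + (h t - hbar t)| := by rw [hdiff]
      _ ≤ σp * (|h t - hbar t| + |Y t|) := by
          apply mul_le_mul_of_nonneg_left _ hσp.le
          calc |Y t + (h t - hbar t)| ≤ |Y t| + |h t - hbar t| := abs_add_le _ _
            _ = |h t - hbar t| + |Y t| := by ring
      _ ≤ σp * (|h t - hbar t| + Real.sqrt K * Real.sqrt J) := by
          apply mul_le_mul_of_nonneg_left _ hσp.le
          linarith
      _ ≤ σp * (1 + Real.sqrt K) * (|h t - hbar t| + Real.sqrt J) := by
          nlinarith [mul_nonneg hσp.le hsJ, mul_nonneg (mul_nonneg hσp.le hsK) habsg]
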